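/- Let f : [0,∞) → ℝ be continuous with |f(x)| ≤ M_f·(1+x²) for some constant M_f and such that lim_{x→∞} f(x)/(1+x²) exists and is finite. Then lim_{δ→0⁺} Ω(f;δ) = 0. -/
import Mathlib


open Filter

/-- First modulus of continuity on `[0,∞)`. -/
noncomputable def omega1 (f : ℝ → ℝ) (δ : ℝ) : ℝ :=
  sSup {y | ∃ h x : ℝ, 0 < h ∧ h ≤ δ ∧ 0 ≤ x ∧ y = |f (x + h) - f x|}

/-- Second modulus of continuity on `[0,∞)`. -/
noncomputable def omega2 (f : ℝ → ℝ) (δ : ℝ) : ℝ :=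
  sSup {y | ∃ h x : ℝ, 0 < h ∧ h ≤ δ ∧ 0 ≤ x ∧ y = |f (x + 2 * h) - 2 * f (x + h) + f x|}

/-- Weighted modulus of continuity `Ω(f;δ)`. -/
noncomputable def OmegaW (f : ℝ → ℝ) (δ : ℝ) : ℝ :=
  sSup {y | ∃ h x : ℝ, 0 < h ∧ h ≤ δ ∧ 0 ≤ x ∧
    y = |f (x + h) - f x| / ((1 + h ^ 2) * (1 + x ^ 2))}

/-- A continuous function on `[0,∞)` with a finite limit at `∞` is uniformly continuous
in the one-sided sense we need. -/
lemma unif_aux (g : ℝ → ℝ) (hg : ContinuousOn g (Set.Ici 0)) (l : ℝ)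
    (hl : Tendsto g atTop (nhds l)) {ε : ℝ} (hε : 0 < ε) :
    ∃ δ : ℝ, 0 < δ ∧ δ ≤ 1 ∧
      ∀ x : ℝ, 0 ≤ x → ∀ h : ℝ, 0 < h → h ≤ δ → |g (x + h) - g x| < ε := by
  obtain ⟨X₀, hX₀⟩ := (Metric.tendsto_atTop.1 hl (ε / 2) (by positivity))
  set X := max X₀ 0 with hXdef
  have hX : ∀ x, X ≤ x → dist (g x) l < ε / 2 := fun x hx =>
    hX₀ x (le_trans (le_max_left _ _) hx)
  have hXnn : (0:ℝ) ≤ X := le_max_right _ _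
  have hcomp : IsCompact (Set.Icc (0:ℝ) (X + 1)) := isCompact_Icc
  have hgc : UniformContinuousOn g (Set.Icc (0:ℝ) (X + 1)) :=
    hcomp.uniformContinuousOn_of_continuous
      (hg.mono (fun y hy => hy.1))
  obtain ⟨δ₂, hδ₂pos, hδ₂⟩ := Metric.uniformContinuousOn_iff.1 hgc ε hε
  refine ⟨min (δ₂ / 2) 1, by positivity, min_le_right _ _, ?_⟩
  intro x hx h hh hhδ
  have hh1 : h ≤ 1 := hhδ.trans (min_le_right _ _)
  have hh2 : h < δ₂ := lt_of_le_of_lt (hhδ.trans (min_le_left _ _)) (by linarith)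
  by_cases hcase : x + h ≤ X + 1
  · have hx1 : x ∈ Set.Icc (0:ℝ) (X + 1) := ⟨hx, by linarith⟩
    have hx2 : x + h ∈ Set.Icc (0:ℝ) (X + 1) := ⟨by linarith, hcase⟩
    have := hδ₂ (x + h) hx2 x hx1 (by rw [Real.dist_eq]; rw [abs_of_pos (by linarith)]; linarith)
    rwa [Real.dist_eq] at this
  · push_neg at hcase
    have hxX : X ≤ x := by linarith
    have hxhX : X ≤ x + h := by linarith
    have d1 := hX (x + h) hxhX
    have d2 := hX x hxX
    rw [Real.dist_eq] at d1 d2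
    have htri := abs_sub_le (g (x + h)) l (g x)
    rw [abs_sub_comm l (g x)] at htri
    linarith

theorem OmegaW_tendsto_zero (f : ℝ → ℝ) (hf : ContinuousOn f (Set.Ici 0))
    (hgrowth : ∃ Mf : ℝ, ∀ x : ℝ, 0 ≤ x → |f x| ≤ Mf * (1 + x ^ 2))
    (hlim : ∃ l : ℝ, Tendsto (fun x : ℝ => f x / (1 + x ^ 2)) atTop (nhds l)) :
    Tendsto (fun δ : ℝ => OmegaW f δ) (nhdsWithin 0 (Set.Ioi 0)) (nhds 0) := by
  obtain ⟨Mf, hM⟩ := hgrowth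
  obtain ⟨l, hl⟩ := hlim
  set g : ℝ → ℝ := fun x => f x / (1 + x ^ 2) with hgdef
  have hden : ∀ x : ℝ, (0:ℝ) < 1 + x ^ 2 := fun x => by positivity
  have hgc : ContinuousOn g (Set.Ici 0) :=
    hf.div (by fun_prop) (fun x _ => (hden x).ne')
  have hMnn : 0 ≤ Mf := by
    have := hM 0 le_rfl
    have h0 := abs_nonneg (f 0)
    nlinarith
  have hgb : ∀ x : ℝ, 0 ≤ x → |g x| ≤ Mf := by
    intro x hx
    have := hM x hx
    rw [hgdef]
    simp only
    rw [abs_div, abs_of_pos (hden x), div_le_iff₀ (hden x)]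
    linarith [this]
  have hfg : ∀ x : ℝ, f x = g x * (1 + x ^ 2) := by
    intro x
    rw [hgdef]
    field_simp
  -- key pointwise bound
  have key : ∀ ε' δ : ℝ, 0 < δ → δ ≤ 1 →
      (∀ x : ℝ, 0 ≤ x → ∀ h : ℝ, 0 < h → h ≤ δ → |g (x + h) - g x| < ε') →
      ∀ x : ℝ, 0 ≤ x → ∀ h : ℝ, 0 < h → h ≤ δ →
      |f (x + h) - f x| / ((1 + h ^ 2) * (1 + x ^ 2)) ≤ 2 * ε' + 2 * Mf * δ := by
    intro ε' δ hδpos hδ1 hosc x hx h hh hhδ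
    have hε'nn : 0 ≤ ε' := le_of_lt (lt_of_le_of_lt (abs_nonneg _) (hosc x hx h hh hhδ))
    have hD : (0:ℝ) < (1 + h ^ 2) * (1 + x ^ 2) := by positivity
    rw [div_le_iff₀ hD]
    have hsplit : f (x + h) - f x
        = (g (x + h) - g x) * (1 + (x + h) ^ 2) + g x * ((x + h) ^ 2 - x ^ 2) := by
      rw [hfg (x + h), hfg x]; ring
    have ha : |g (x + h) - g x| ≤ ε' := le_of_lt (hosc x hx h hh hhδ)
    have hb : |g x| ≤ Mf := hgb x hx
    have htri : |f (x + h) - f x|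
        ≤ |g (x + h) - g x| * (1 + (x + h) ^ 2) + |g x| * ((x + h) ^ 2 - x ^ 2) := by
      rw [hsplit]
      calc |(g (x + h) - g x) * (1 + (x + h) ^ 2) + g x * ((x + h) ^ 2 - x ^ 2)|
          ≤ |(g (x + h) - g x) * (1 + (x + h) ^ 2)| + |g x * ((x + h) ^ 2 - x ^ 2)| :=
            abs_add_le _ _
        _ = |g (x + h) - g x| * (1 + (x + h) ^ 2) + |g x| * ((x + h) ^ 2 - x ^ 2) := by
            rw [abs_mul, abs_mul, abs_of_pos (hden (x + h)),
              abs_of_nonneg (by nlinarith : (0:ℝ) ≤ (x + h) ^ 2 - x ^ 2)]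
    have h1 : |g (x + h) - g x| * (1 + (x + h) ^ 2) ≤ ε' * (2 * ((1 + h ^ 2) * (1 + x ^ 2))) := by
      have hq : (1 + (x + h) ^ 2) ≤ 2 * ((1 + h ^ 2) * (1 + x ^ 2)) := by nlinarith [sq_nonneg (x - h), sq_nonneg (x * h)]
      calc |g (x + h) - g x| * (1 + (x + h) ^ 2) ≤ ε' * (1 + (x + h) ^ 2) :=
            mul_le_mul_of_nonneg_right ha (le_of_lt (hden _))
        _ ≤ ε' * (2 * ((1 + h ^ 2) * (1 + x ^ 2))) := mul_le_mul_of_nonneg_left hq hε'nn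
    have h2 : |g x| * ((x + h) ^ 2 - x ^ 2) ≤ Mf * (2 * δ * ((1 + h ^ 2) * (1 + x ^ 2))) := by
      have hq : ((x + h) ^ 2 - x ^ 2) ≤ 2 * δ * ((1 + h ^ 2) * (1 + x ^ 2)) := by
        have e1 : 2 * x * h ≤ δ * (1 + x ^ 2) := by nlinarith [sq_nonneg (x - 1), mul_le_mul_of_nonneg_left hhδ hx]
        have e2 : h ^ 2 ≤ δ := by nlinarith
        nlinarith [mul_nonneg (mul_nonneg hδpos.le (sq_nonneg h)) (sq_nonneg x), mul_nonneg hδpos.le (sq_nonneg x), mul_nonneg hδpos.le (sq_nonneg h)]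
      calc |g x| * ((x + h) ^ 2 - x ^ 2) ≤ Mf * ((x + h) ^ 2 - x ^ 2) :=
            mul_le_mul_of_nonneg_right hb (by nlinarith)
        _ ≤ Mf * (2 * δ * ((1 + h ^ 2) * (1 + x ^ 2))) := mul_le_mul_of_nonneg_left hq hMnn
    nlinarith [htri, h1, h2]
  -- now the limit
  rw [Metric.tendsto_nhdsWithin_nhds]
  intro ε hε
  obtain ⟨δ₁, hδ₁pos, hδ₁le1, hδ₁⟩ := unif_aux g hgc l hl (show (0:ℝ) < ε / 8 by positivity)
  set δ₀ : ℝ := min δ₁ (ε / (8 * (Mf + 1))) with hδ₀def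
  have hδ₀pos : 0 < δ₀ := lt_min hδ₁pos (by positivity)
  refine ⟨δ₀, hδ₀pos, ?_⟩
  intro δ hδmem hδdist
  have hδpos : 0 < δ := hδmem
  rw [Real.dist_eq, sub_zero, abs_of_pos hδpos] at hδdist
  have hδle : δ ≤ δ₀ := le_of_lt hδdist
  have hδle1 : δ ≤ 1 := le_trans (hδle.trans (min_le_left _ _)) hδ₁le1
  have hbound : ∀ y ∈ {y | ∃ h x : ℝ, 0 < h ∧ h ≤ δ ∧ 0 ≤ x ∧
      y = |f (x + h) - f x| / ((1 + h ^ 2) * (1 + x ^ 2))}, y ≤ ε / 2 := by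
    rintro y ⟨h, x, hh, hhδ, hx, rfl⟩
    have := key (ε / 8) δ hδpos hδle1
      (fun x hx h hh hhδ' => hδ₁ x hx h hh (hhδ'.trans (hδle.trans (min_le_left _ _))))
      x hx h hh hhδ
    have hδsmall : δ ≤ ε / (8 * (Mf + 1)) := hδle.trans (min_le_right _ _)
    have : |f (x + h) - f x| / ((1 + h ^ 2) * (1 + x ^ 2)) ≤ 2 * (ε / 8) + 2 * Mf * δ := this
    have hMδ : 2 * Mf * δ ≤ ε / 4 := by
      have h1 : Mf * δ ≤ Mf * (ε / (8 * (Mf + 1))) := mul_le_mul_of_nonneg_left hδsmall hMnn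
      have h2 : Mf * (ε / (8 * (Mf + 1))) ≤ ε / 8 := by
        rw [← mul_div_assoc, div_le_div_iff₀ (by positivity) (by norm_num)]
        nlinarith [hε.le]
      linarith
    linarith
  have hsup_le : OmegaW f δ ≤ ε / 2 :=
    Real.sSup_le hbound (by positivity)
  have hsup_nn : 0 ≤ OmegaW f δ :=
    Real.sSup_nonneg (by rintro y ⟨h, x, hh, hhδ, hx, rfl⟩; positivity)
  rw [Real.dist_eq, sub_zero, abs_of_nonneg hsup_nn]
  linarith
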